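/- Let F = F_q(t) and let L be an infinite field extension of F (for instance L = F or an algebraic closure of F). For a ∈ F_q[t] define φ^{(a)} : L → L by φ^{(a)}(x) = t·x + a·x^q + x^{q²}. If a, a' ∈ F_q[t] and c ∈ F^× satisfy c·φ^{(a')}(x) = φ^{(a)}(c·x) for all x ∈ L, then c ∈ F_q^× and a = a'. (Hence the rank-2 Drinfeld modules φ^{(a)}_t = t + aτ + τ², a ∈ F_q[t], which all have good reduction at every finite place of F, are pairwise non-isomorphic over F, so there are infinitely many isomorphism classes of rank-2 Drinfeld modules over F with everywhere good reduction.) -/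

import Mathlib

/-- Let `F = F_q(t)` and `L` an infinite field extension of `F`. For
`a ∈ F_q[t]` let `φ^{(a)}(x) = t·x + a·x^q + x^{q²}` (the rank-2 Drinfeld module
`φ^{(a)}_t = t + aτ + τ²`). If `a, a' ∈ F_q[t]` and `c ∈ F^×` satisfy
`c·φ^{(a')}(x) = φ^{(a)}(c·x)` for all `x ∈ L`, then `c ∈ F_q^×` and `a = a'`.
Hence the `φ^{(a)}` are pairwise non-isomorphic over `F`. -/
theorem rank_two_drinfeld_good_reduction_non_isomorphic
    (p m : ℕ) (hp : p.Prime) (hm : 0 < m)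
    (Fq : Type) [Field Fq] [Fintype Fq] (hq : Fintype.card Fq = p ^ m)
    (L : Type) [Field L] [Algebra (RatFunc Fq) L] [Infinite L]
    (a a' : Polynomial Fq) (c : RatFunc Fq) (hc : c ≠ 0)
    (h : ∀ x : L,
      algebraMap (RatFunc Fq) L c *
          (algebraMap (RatFunc Fq) L RatFunc.X * x
            + algebraMap (RatFunc Fq) L (algebraMap (Polynomial Fq) (RatFunc Fq) a')
                * x ^ Fintype.card Fq
            + x ^ Fintype.card Fq ^ 2)
        = algebraMap (RatFunc Fq) L RatFunc.X * (algebraMap (RatFunc Fq) L c * x)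
            + algebraMap (RatFunc Fq) L (algebraMap (Polynomial Fq) (RatFunc Fq) a)
                * (algebraMap (RatFunc Fq) L c * x) ^ Fintype.card Fq
            + (algebraMap (RatFunc Fq) L c * x) ^ (Fintype.card Fq ^ 2)) :
    (∃ u : Fqˣ, algebraMap Fq (RatFunc Fq) (u : Fq) = c) ∧ a = a' := by
  set q := Fintype.card Fq with hqdef
  have hq1 : 1 < q := Fintype.one_lt_card
  have hqq2 : q < q ^ 2 := by nlinarith
  set A := algebraMap (RatFunc Fq) L with hA
  set α : L := A c * A (algebraMap (Polynomial Fq) (RatFunc Fq) a')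
      - A (algebraMap (Polynomial Fq) (RatFunc Fq) a) * (A c) ^ q with hα
  set β : L := A c - (A c) ^ (q ^ 2) with hβ
  have key : ∀ x : L, α * x ^ q + β * x ^ (q ^ 2) = 0 := by
    intro x
    have hx := h x
    rw [hα, hβ]
    ring_nf
    ring_nf at hx
    linear_combination hx
  -- the polynomial `C α * X^q + C β * X^(q^2)` vanishes on the infinite field `L`
  have hQ : (Polynomial.C α * Polynomial.X ^ q
      + Polynomial.C β * Polynomial.X ^ (q ^ 2) : Polynomial L) = 0 := by
    apply Polynomial.eq_zero_of_infinite_isRoot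
    apply Set.infinite_of_injective_forall_mem (f := fun x : L => x)
    · exact fun x y hxy => hxy
    · intro x
      simp only [Set.mem_setOf_eq, Polynomial.IsRoot, Polynomial.eval_add,
        Polynomial.eval_mul, Polynomial.eval_pow, Polynomial.eval_C, Polynomial.eval_X]
      exact key x
  have hαz : α = 0 := by
    have := congrArg (fun P => Polynomial.coeff P q) hQ
    simpa [Polynomial.coeff_X_pow, hqq2.ne] using this
  have hβz : β = 0 := by
    have := congrArg (fun P => Polynomial.coeff P (q ^ 2)) hQ
    simpa [Polynomial.coeff_X_pow, hqq2.ne'] using this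
  have hAinj : Function.Injective A := (algebraMap (RatFunc Fq) L).injective
  -- `c ^ (q^2) = c`
  have hcc : c ^ (q ^ 2) = c := by
    apply hAinj
    rw [map_pow]
    have := sub_eq_zero.mp hβz
    exact this.symm
  -- `c` is integral over `Fq[t]`, hence a polynomial
  have hint : IsIntegral (Polynomial Fq) c := by
    refine ⟨Polynomial.X ^ (q ^ 2) - Polynomial.X, ?_, ?_⟩
    · apply (Polynomial.monic_X_pow _).sub_of_left
      rw [Polynomial.degree_X_pow, Polynomial.degree_X]
      exact_mod_cast by omega
    · simp [hcc]
  obtain ⟨y, hy⟩ := IsIntegrallyClosed.isIntegral_iff.mp hint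
  have hyinj : Function.Injective (algebraMap (Polynomial Fq) (RatFunc Fq)) :=
    IsFractionRing.injective _ _
  have hy0 : y ≠ 0 := by
    rintro rfl
    rw [map_zero] at hy
    exact hc hy.symm
  have hyy : y ^ (q ^ 2) = y := by
    apply hyinj
    rw [map_pow, hy, hcc]
  have hdeg : y.natDegree = 0 := by
    have := congrArg Polynomial.natDegree hyy
    rw [Polynomial.natDegree_pow] at this
    nlinarith [Polynomial.natDegree_pow y (q ^ 2)]
  obtain ⟨u, rfl⟩ := Polynomial.natDegree_eq_zero.mp hdeg
  have hu0 : u ≠ 0 := by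
    rintro rfl
    simp at hy0
  have hcu : algebraMap Fq (RatFunc Fq) u = c := by
    rw [RatFunc.algebraMap_eq_C, ← RatFunc.algebraMap_C, hy]
  -- `c ^ q = c` since `u ∈ Fq`
  have hcq : c ^ q = c := by
    rw [← hcu, ← map_pow, hqdef, FiniteField.pow_card]
  refine ⟨⟨Units.mk0 u hu0, hcu⟩, ?_⟩
  -- from `α = 0` we get `a = a'`
  have hfin : A c * A (algebraMap (Polynomial Fq) (RatFunc Fq) a')
      = A (algebraMap (Polynomial Fq) (RatFunc Fq) a) * A c := by
    have := sub_eq_zero.mp hαz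
    rw [this, ← map_pow, hcq]
  have : c * algebraMap (Polynomial Fq) (RatFunc Fq) a'
      = algebraMap (Polynomial Fq) (RatFunc Fq) a * c := by
    apply hAinj
    simpa using hfin
  have haa : algebraMap (Polynomial Fq) (RatFunc Fq) a
      = algebraMap (Polynomial Fq) (RatFunc Fq) a' := by
    field_simp at this
    exact this.symm
  exact hyinj haa
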